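/- arXiv:1801.01216 — 8 statements merged into one kernel-verified Lean document; each statement's English description precedes it below -/
import Mathlib

section
/- Let A be a unital C*-algebra and let a, b be elements of A with 0 ≤ a ≤ 1 and 0 ≤ b ≤ 1. If a*b = b*a = 0 (a and b are orthogonal), then |a - b| + |1 - a - b| = 1, i.e., a is absolutely compatible with b. -/
/-- The absolute value `|x| = (x* x)^(1/2)` in a C*-algebra. -/
noncomputable def cstarAbs {A : Type*} [CStarAlgebra A] [PartialOrder A] [StarOrderedRing A]
    (x : A) : A := CFC.sqrt (star x * x)

/-- Orthogonal positive contractions in a unital C*-algebra are absolutely compatible. -/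
theorem stmt0 {A : Type*} [CStarAlgebra A] [PartialOrder A] [StarOrderedRing A]
    (a b : A) (ha0 : 0 ≤ a) (ha1 : a ≤ 1) (hb0 : 0 ≤ b) (hb1 : b ≤ 1)
    (hab : a * b = 0) (hba : b * a = 0) :
    cstarAbs (a - b) + cstarAbs (1 - a - b) = 1 := by
  have hasa : IsSelfAdjoint a := .of_nonneg ha0
  have hbsa : IsSelfAdjoint b := .of_nonneg hb0
  have hc0 : 0 ≤ a + b := add_nonneg ha0 hb0
  -- (a+b)^2 = a^2 + b^2 ≤ a + b
  have hsq : (a + b) ^ 2 = a ^ 2 + b ^ 2 := by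
    rw [sq, add_mul, mul_add, mul_add, hab, hba, sq, sq]
    simp
  have ha2 : a ^ 2 ≤ a := by simpa using CStarAlgebra.pow_antitone ha0 ha1 (by norm_num : 1 ≤ 2)
  have hb2 : b ^ 2 ≤ b := by simpa using CStarAlgebra.pow_antitone hb0 hb1 (by norm_num : 1 ≤ 2)
  have hcc : (a + b) ^ 2 ≤ a + b := hsq ▸ add_le_add ha2 hb2
  -- hence ‖a+b‖ ≤ 1, so a + b ≤ 1
  have hc1 : a + b ≤ 1 := by
    rw [← CStarAlgebra.norm_le_one_iff_of_nonneg (a + b) hc0]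
    have hn : ‖a + b‖ * ‖a + b‖ ≤ ‖a + b‖ := by
      calc ‖a + b‖ * ‖a + b‖ = ‖(a + b) ^ 2‖ := by
            rw [sq]
            exact (CStarRing.norm_star_mul_self (x := a + b)).symm.trans
              (by rw [(hasa.add hbsa).star_eq])
        _ ≤ ‖a + b‖ := CStarAlgebra.norm_le_norm_of_nonneg_of_le (CStarAlgebra.pow_nonneg hc0 2) hcc
    nlinarith [norm_nonneg (a + b)]
  have h1 : cstarAbs (a - b) = a + b := by
    have : star (a - b) * (a - b) = (a + b) ^ 2 := by
      rw [(hasa.sub hbsa).star_eq, hsq]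
      rw [sub_mul, mul_sub, mul_sub, hab, hba]
      noncomm_ring
    rw [cstarAbs, this, CFC.sqrt_sq (a + b) hc0]
  have h2 : cstarAbs (1 - a - b) = 1 - a - b := by
    have hd0 : 0 ≤ 1 - a - b := by rwa [sub_sub, sub_nonneg]
    have hdsa : IsSelfAdjoint (1 - a - b) := .of_nonneg hd0
    rw [cstarAbs, hdsa.star_eq, ← sq, CFC.sqrt_sq _ hd0]
  rw [h1, h2]
  abel
end

section
/- Let A be a unital C*-algebra and let a, b ∈ A with 0 ≤ a, b ≤ 1. Then a is absolutely compatible with b if and only if 2(a∘b) = a + b - |a - b|, where a∘b = (ab + ba)/2 is the Jordan product. -/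
/-- For `0 ≤ a, b ≤ 1` in a unital C*-algebra, `a` is absolutely compatible with `b`
iff `2 (a ∘ b) = a + b - |a - b|`, where `a ∘ b = (ab + ba)/2`. -/
theorem stmt1 {A : Type*} [CStarAlgebra A] [PartialOrder A] [StarOrderedRing A]
    (a b : A) (ha0 : 0 ≤ a) (ha1 : a ≤ 1) (hb0 : 0 ≤ b) (hb1 : b ≤ 1) :
    cstarAbs (a - b) + cstarAbs (1 - a - b) = 1 ↔
      2 • ((2 : ℂ)⁻¹ • (a * b + b * a)) = a + b - cstarAbs (a - b) := by
  have hsa : IsSelfAdjoint a := .of_nonneg ha0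
  have hsb : IsSelfAdjoint b := .of_nonneg hb0
  have hsx : IsSelfAdjoint (a - b) := hsa.sub hsb
  have hsy : IsSelfAdjoint (1 - a - b) := ((IsSelfAdjoint.of_nonneg zero_le_one).sub hsa).sub hsb
  have hxx : (0:A) ≤ (a-b)*(a-b) := by
    simpa [hsx.star_eq] using star_mul_self_nonneg (a - b)
  set p : A := cstarAbs (a - b) with hp_def
  set q : A := cstarAbs (1 - a - b) with hq_def
  have hp0 : 0 ≤ p := CFC.sqrt_nonneg _
  have hq0 : 0 ≤ q := CFC.sqrt_nonneg _
  have hpp : p * p = (a-b)*(a-b) := by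
    rw [hp_def, cstarAbs, hsx.star_eq, ← sq, CFC.sq_sqrt _ hxx]
  have hyy : (0:A) ≤ (1-a-b)*(1-a-b) := by
    simpa [hsy.star_eq] using star_mul_self_nonneg (1 - a - b)
  have hqq : q * q = (1-a-b)*(1-a-b) := by
    rw [hq_def, cstarAbs, hsy.star_eq, ← sq, CFC.sq_sqrt _ hyy]
  -- `|a - b| ≤ 1`
  have hspec_le : ∀ r ∈ spectrum ℝ (a-b), r ≤ 1 := by
    refine (le_algebraMap_iff_spectrum_le (r := (1:ℝ)) hsx).mp ?_
    rw [map_one]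
    calc a - b ≤ a := by simpa using hb0
    _ ≤ 1 := ha1
  have hspec_ge : ∀ r ∈ spectrum ℝ (a-b), -1 ≤ r := by
    refine (algebraMap_le_iff_le_spectrum (r := (-1:ℝ)) hsx).mp ?_
    rw [map_neg, map_one]
    calc (-1 : A) = 0 - 1 := (zero_sub 1).symm
    _ ≤ a - b := sub_le_sub ha0 hb1
  have hxle1 : (a-b)*(a-b) ≤ 1 := by
    conv_lhs => rw [← cfc_id ℝ (a-b) hsx]
    rw [← cfc_mul (id : ℝ → ℝ) id (a-b)]
    refine (cfc_le_one_iff _ _).mpr fun r hr => ?_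
    have h1 := hspec_le r hr
    have h2 := hspec_ge r hr
    simp only [id]
    nlinarith
  have hpple1 : p * p ≤ 1 := hpp ▸ hxle1
  have hp1 : p ≤ 1 := by
    rw [← CStarAlgebra.norm_le_one_iff_of_nonneg p hp0]
    have hn : ‖p * p‖ ≤ 1 := by
      rw [CStarAlgebra.norm_le_one_iff_of_nonneg (p*p) (hpp ▸ hxx)]
      exact hpple1
    have hns := CStarRing.norm_star_mul_self (x := p)
    rw [hp0.isSelfAdjoint.star_eq] at hns
    rw [hns] at hn
    nlinarith [norm_nonneg p]
  -- simplify the scalar action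
  have h2 : ∀ v : A, 2 • ((2 : ℂ)⁻¹ • v) = v := fun v => by
    rw [two_smul, ← add_smul]
    norm_num
  have hdiff : ∀ z : A, z * z = (a-b)*(a-b) →
      ((1 - z) * (1 - z) = (1-a-b)*(1-a-b) ↔ a*b + b*a = a + b - z) := by
    intro z hzz
    have expand : (1-a-b)*(1-a-b) - (1 - z) * (1 - z)
        = ((a-b)*(a-b) - z*z) + (((a*b + b*a) - (a + b - z)) + ((a*b + b*a) - (a + b - z))) := by
      noncomm_ring
    rw [hzz, sub_self, zero_add] at expand
    constructor
    · intro h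
      have h0 : ((a*b + b*a) - (a + b - z)) + ((a*b + b*a) - (a + b - z)) = 0 := by
        rw [← expand, h, sub_self]
      have h0' : (2:ℂ) • ((a*b + b*a) - (a + b - z)) = 0 := by
        rw [two_smul]; exact h0
      rcases smul_eq_zero.mp h0' with h' | h'
      · norm_num at h'
      · exact sub_eq_zero.mp h'
    · intro h
      have : (a*b + b*a) - (a + b - z) = 0 := sub_eq_zero.mpr h
      rw [this, add_zero] at expand
      exact (sub_eq_zero.mp expand).symm
  constructor
  · intro h
    have hq_eq : q = 1 - p := eq_sub_of_add_eq' h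
    have : (1 - p) * (1 - p) = (1-a-b)*(1-a-b) := by rw [← hq_eq]; exact hqq
    rw [h2]
    exact (hdiff p hpp).mp this
  · intro h
    rw [h2] at h
    have hy : (1 - p) * (1 - p) = (1-a-b)*(1-a-b) := (hdiff p hpp).mpr h
    have hq_eq : q = 1 - p := by
      rw [hq_def, cstarAbs, hsy.star_eq, ← hy, ← sq, CFC.sqrt_sq _ (sub_nonneg.mpr hp1)]
    rw [hq_eq]
    abel
end

section
/- Let A be a unital C*-algebra and let a, b ∈ A with 0 ≤ a, b ≤ 1. Then a is absolutely compatible with b if and only if a∘b ≥ 0, (1-a)∘(1-b) ≥ 0, and (a∘b)·((1-a)∘(1-b)) = 0. -/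
section Helpers

set_option linter.unusedSectionVars false
variable {A : Type*} [CStarAlgebra A] [PartialOrder A] [StarOrderedRing A]

private lemma half_smul (x : A) : (2:ℂ)⁻¹ • (x + x) = x := by
  rw [← two_smul ℂ x, smul_smul]
  norm_num

private lemma half_nonneg {x : A} (h : 0 ≤ x) : 0 ≤ (2:ℂ)⁻¹ • x := by
  rw [show ((2:ℂ)⁻¹) = (((2:ℝ)⁻¹ : ℝ) : ℂ) by norm_num, Complex.coe_smul]
  exact smul_nonneg (by norm_num) h

private lemma nonneg_of_half {x : A} (h : 0 ≤ (2:ℂ)⁻¹ • x) : 0 ≤ x := by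
  have h2 : (0:A) ≤ (2:ℂ) • ((2:ℂ)⁻¹ • x) := by
    rw [show ((2:ℂ)) = (((2:ℝ) : ℝ) : ℂ) by norm_num, Complex.coe_smul]
    exact smul_nonneg (by norm_num) h
  rwa [smul_smul, (by norm_num : (2:ℂ) * (2:ℂ)⁻¹ = 1), one_smul] at h2

private lemma commute_aeval' (x a : A) (h : Commute x a) (p : Polynomial ℝ) :
    Commute x (Polynomial.aeval a p) := by
  induction p using Polynomial.induction_on with
  | C r => simpa [Polynomial.aeval_C] using Algebra.commute_algebraMap_right r x
  | add p q hp hq => simpa [map_add] using hp.add_right hq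
  | monomial n r hm =>
    simp only [map_mul, Polynomial.aeval_C, map_pow, Polynomial.aeval_X]
    exact (Algebra.commute_algebraMap_right r x).mul_right (h.pow_right (n + 1))

private lemma commute_cfc' (x a : A) (h : Commute x a) (ha : IsSelfAdjoint a) (f : ℝ → ℝ) :
    Commute x (cfc f a) := by
  by_cases hf : ContinuousOn f (spectrum ℝ a)
  · rw [cfc_apply f a ha hf]
    have key : ∀ g : C(spectrum ℝ a, ℝ), Commute x (cfcHom ha g) := by
      intro g
      have hclosed : IsClosed {g : C(spectrum ℝ a, ℝ) | Commute x (cfcHom ha g)} := by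
        have hc : Continuous (fun g : C(spectrum ℝ a, ℝ) => cfcHom ha g) :=
          (cfcHom_isClosedEmbedding ha).continuous
        exact isClosed_eq (by fun_prop) (by fun_prop)
      have hpoly : (polynomialFunctions (spectrum ℝ a) : Set C(spectrum ℝ a, ℝ)) ⊆
          {g | Commute x (cfcHom ha g)} := by
        rintro g hg
        rw [polynomialFunctions_coe] at hg
        obtain ⟨p, rfl⟩ := hg
        have heq : cfcHom ha (Polynomial.toContinuousMapOnAlgHom (spectrum ℝ a) p)
            = Polynomial.aeval a p := by
          rw [← cfc_polynomial p a ha, cfc_apply (fun r : ℝ => p.eval r) a ha (by fun_prop)]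
          congr 1
        rw [Set.mem_setOf_eq, heq]
        exact commute_aeval' x a h p
      have hmem : g ∈ closure (polynomialFunctions (spectrum ℝ a) : Set C(spectrum ℝ a, ℝ)) := by
        have h2 : g ∈ (polynomialFunctions (spectrum ℝ a)).topologicalClosure :=
          polynomialFunctions.topologicalClosure (spectrum ℝ a) ▸ trivial
        exact h2
      exact hclosed.closure_subset_iff.mpr hpoly hmem
    exact key _
  · rw [cfc_apply_of_not_continuousOn a hf]
    exact Commute.zero_right x

private lemma orth' {x y : A} (hx : 0 ≤ x) (hy : 0 ≤ y) (h : x * y + y * x = 0) :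
    x * y = 0 := by
  have h1 : x * y = -(y * x) := eq_neg_of_add_eq_zero_left h
  have hyy : (0:A) ≤ y * y := by
    simpa [(IsSelfAdjoint.of_nonneg hy).star_eq] using star_mul_self_nonneg y
  have hcomm : Commute x (y * y) := by
    show x * (y * y) = (y * y) * x
    calc x * (y * y) = (x * y) * y := by noncomm_ring
      _ = -(y * x) * y := by rw [h1]
      _ = -(y * (x * y)) := by noncomm_ring
      _ = -(y * -(y * x)) := by rw [h1]
      _ = (y * y) * x := by noncomm_ring
  have hsqrt : CFC.sqrt (y * y) = y := CFC.sqrt_mul_self y hy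
  have hsqrt_cfc : CFC.sqrt (y * y) = cfc (fun r : ℝ => Real.sqrt r) (y * y) := by
    refine CFC.sqrt_unique ?_ (cfc_nonneg fun r _ => Real.sqrt_nonneg r)
    rw [← cfc_mul (fun r : ℝ => Real.sqrt r) (fun r : ℝ => Real.sqrt r) (y * y)]
    conv_rhs => rw [← cfc_id ℝ (y * y)]
    exact cfc_congr fun r hr => Real.mul_self_sqrt (spectrum_nonneg_of_nonneg hyy hr)
  have hc : Commute x y := by
    rw [← hsqrt, hsqrt_cfc]
    exact commute_cfc' x (y * y) hcomm (IsSelfAdjoint.of_nonneg hyy) _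
  have h2 : x * y + x * y = 0 := by
    nth_rewrite 2 [hc.eq]
    exact h
  calc x * y = (2:ℂ)⁻¹ • (x * y + x * y) := (half_smul _).symm
    _ = 0 := by rw [h2, smul_zero]

end Helpers

section AbsLemmas

set_option linter.unusedSectionVars false
variable {A : Type*} [CStarAlgebra A] [PartialOrder A] [StarOrderedRing A]

private lemma cstarAbs_eq_cfc_abs {x : A} (hx : IsSelfAdjoint x) :
    cstarAbs x = cfc (fun r : ℝ => |r|) x := by
  refine CFC.sqrt_unique ?_ (cfc_nonneg fun r _ => abs_nonneg r)
  rw [← cfc_mul (fun r : ℝ => |r|) (fun r : ℝ => |r|) x, hx.star_eq]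
  conv_rhs => rw [← cfc_id ℝ x, ← cfc_mul (id : ℝ → ℝ) (id : ℝ → ℝ) x]
  exact cfc_congr fun r _ => abs_mul_abs_self r

private lemma cstarAbs_mul_self {x : A} (hx : IsSelfAdjoint x) :
    cstarAbs x * cstarAbs x = x * x := by
  unfold cstarAbs
  rw [hx.star_eq]
  exact CFC.sqrt_mul_sqrt_self (x * x) (by simpa [hx.star_eq] using star_mul_self_nonneg x)

private lemma le_cstarAbs {x : A} (hx : IsSelfAdjoint x) : x ≤ cstarAbs x := by
  rw [cstarAbs_eq_cfc_abs hx]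
  conv_lhs => rw [← cfc_id ℝ x]
  exact cfc_mono fun r _ => le_abs_self r

private lemma neg_le_cstarAbs {x : A} (hx : IsSelfAdjoint x) : -x ≤ cstarAbs x := by
  have h : cstarAbs (-x) = cstarAbs x := by
    unfold cstarAbs
    rw [star_neg, neg_mul_neg]
  rw [← h]
  exact le_cstarAbs hx.neg

end AbsLemmas

/-- For `0 ≤ a, b ≤ 1` in a unital C*-algebra, `a` is absolutely compatible with `b`
iff `a ∘ b ≥ 0`, `(1-a) ∘ (1-b) ≥ 0` and `(a ∘ b) ((1-a) ∘ (1-b)) = 0`. -/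
theorem stmt2 {A : Type*} [CStarAlgebra A] [PartialOrder A] [StarOrderedRing A]
    (a b : A) (ha0 : 0 ≤ a) (ha1 : a ≤ 1) (hb0 : 0 ≤ b) (hb1 : b ≤ 1) :
    cstarAbs (a - b) + cstarAbs (1 - a - b) = 1 ↔
      (0 ≤ (2 : ℂ)⁻¹ • (a * b + b * a) ∧
        0 ≤ (2 : ℂ)⁻¹ • ((1 - a) * (1 - b) + (1 - b) * (1 - a)) ∧
        ((2 : ℂ)⁻¹ • (a * b + b * a)) *
          ((2 : ℂ)⁻¹ • ((1 - a) * (1 - b) + (1 - b) * (1 - a))) = 0) := by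
  have hsa : star a = a := (IsSelfAdjoint.of_nonneg ha0).star_eq
  have hsb : star b = b := (IsSelfAdjoint.of_nonneg hb0).star_eq
  set C : A := a * b + b * a with hC
  set D : A := (1 - a) * (1 - b) + (1 - b) * (1 - a) with hD
  set p : A := a - b with hp
  set q : A := 1 - a - b with hq
  set s : A := (2:ℂ)⁻¹ • C with hs
  set t : A := (2:ℂ)⁻¹ • D with ht
  have hCsa : IsSelfAdjoint C := by
    have h : star C = C := by rw [hC, star_add, star_mul, star_mul, hsa, hsb, add_comm]
    exact h
  have h1a : star ((1:A) - a) = 1 - a := by rw [star_sub, star_one, hsa]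
  have h1b : star ((1:A) - b) = 1 - b := by rw [star_sub, star_one, hsb]
  have hDsa : IsSelfAdjoint D := by
    have h : star D = D := by rw [hD, star_add, star_mul, star_mul, h1a, h1b, add_comm]
    exact h
  have hpsa : IsSelfAdjoint p := by
    have h : star p = p := by rw [hp, star_sub, hsa, hsb]
    exact h
  have hqsa : IsSelfAdjoint q := by
    have h : star q = q := by rw [hq, star_sub, star_sub, star_one, hsa, hsb]
    exact h
  have hss : s + s = C := by rw [hs, ← smul_add, half_smul]
  have htt : t + t = D := by rw [ht, ← smul_add, half_smul]
  have hqq : q + q = D - C := by rw [hq, hC, hD]; noncomm_ring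
  constructor
  · intro h
    set v : A := cstarAbs q with hv
    have hu_sq : cstarAbs p * cstarAbs p = p * p := cstarAbs_mul_self hpsa
    have hv_sq : v * v = q * q := cstarAbs_mul_self hqsa
    have hu_eq : cstarAbs p = 1 - v := eq_sub_of_add_eq h
    have e1 : (1 - v) * (1 - v) = p * p := by rw [← hu_eq]; exact hu_sq
    have e2 : v + v = 1 + q * q - p * p := by
      rw [← hv_sq, ← e1]; noncomm_ring
    have key : v + v = C + D := by
      rw [e2, hp, hq, hC, hD]; noncomm_ring
    have hvq : (v - q) + (v - q) = C + C := by
      rw [show (v - q) + (v - q) = (v + v) - (q + q) by abel, key, hqq]; abel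
    have hvq' : (v + q) + (v + q) = D + D := by
      rw [show (v + q) + (v + q) = (v + v) + (q + q) by abel, key, hqq]; abel
    have hCpos : 0 ≤ C := by
      have h1 : 0 ≤ (v - q) + (v - q) :=
        add_nonneg (sub_nonneg.mpr (le_cstarAbs hqsa)) (sub_nonneg.mpr (le_cstarAbs hqsa))
      rw [hvq] at h1
      rw [← half_smul C]
      exact half_nonneg h1
    have hDpos : 0 ≤ D := by
      have h2 : 0 ≤ v + q := by
        have hn := neg_le_cstarAbs hqsa
        rw [← sub_neg_eq_add]
        exact sub_nonneg.mpr hn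
      have h1 : 0 ≤ (v + q) + (v + q) := add_nonneg h2 h2
      rw [hvq'] at h1
      rw [← half_smul D]
      exact half_nonneg h1
    have hvvqq : (C + D) * (C + D) = (D - C) * (D - C) := by
      rw [← key, ← hqq]
      calc (v + v) * (v + v) = v*v + v*v + v*v + v*v := by noncomm_ring
        _ = q*q + q*q + q*q + q*q := by rw [hv_sq]
        _ = (q + q) * (q + q) := by noncomm_ring
    have hsum : (C*D + D*C) + (C*D + D*C) = 0 := by
      have hh : (C + D) * (C + D) - (D - C) * (D - C) = (C*D + D*C) + (C*D + D*C) := by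
        noncomm_ring
      rw [← hh, hvvqq, sub_self]
    have hCDDC : C*D + D*C = 0 := by
      rw [← half_smul (C*D + D*C), hsum, smul_zero]
    have hCD0 : C * D = 0 := orth' hCpos hDpos hCDDC
    refine ⟨?_, ?_, ?_⟩
    · rw [hs]; exact half_nonneg hCpos
    · rw [ht]; exact half_nonneg hDpos
    · rw [hs, ht, smul_mul_smul_comm, hCD0, smul_zero]
  · rintro ⟨h1, h2, h3⟩
    have hCpos : 0 ≤ C := nonneg_of_half (by rw [← hs]; exact h1)
    have hDpos : 0 ≤ D := nonneg_of_half (by rw [← ht]; exact h2)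
    have hCD0 : C * D = 0 := by
      have h4 : ((2:ℂ)⁻¹ * (2:ℂ)⁻¹) • (C * D) = 0 := by
        rw [← smul_mul_smul_comm, ← hs, ← ht]; exact h3
      have h5 : C * D = ((2:ℂ)*(2:ℂ)) • (((2:ℂ)⁻¹*(2:ℂ)⁻¹) • (C*D)) := by
        rw [smul_smul, show ((2:ℂ)*2) * (2⁻¹*2⁻¹) = 1 by norm_num, one_smul]
      rw [h5, h4, smul_zero]
    have hDC0 : D * C = 0 := by
      have h6 := congrArg star hCD0
      rwa [star_mul, hCsa.star_eq, hDsa.star_eq, star_zero] at h6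
    have habs_q : cstarAbs q = s + t := by
      have hst : 0 ≤ s + t := add_nonneg h1 h2
      have hsq : (s + t) * (s + t) = star q * q := by
        rw [hqsa.star_eq]
        have e1 : s + t = (2:ℂ)⁻¹ • (C + D) := by
          rw [hs, ht]; exact (smul_add ((2:ℂ)⁻¹) C D).symm
        have e2 : q = (2:ℂ)⁻¹ • (D - C) := by rw [← hqq, half_smul]
        rw [e1, e2, smul_mul_smul_comm, smul_mul_smul_comm]
        congr 1
        have hh : (C + D) * (C + D)
            = (D - C) * (D - C) + ((C*D + D*C) + (C*D + D*C)) := by noncomm_ring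
        rw [hh, hCD0, hDC0]
        simp
      exact CFC.sqrt_unique hsq hst
    have habs_q_le : s + t ≤ 1 := by
      rw [← habs_q, cstarAbs_eq_cfc_abs hqsa]
      have hspec : ∀ r ∈ spectrum ℝ q, |r| ≤ 1 := by
        intro r hr
        have hle : q ≤ algebraMap ℝ A 1 := by
          rw [map_one, hq, sub_sub]
          exact sub_le_self 1 (add_nonneg ha0 hb0)
        have hge : algebraMap ℝ A (-1) ≤ q := by
          rw [map_neg, map_one, hq]
          have hab : a + b ≤ 1 + 1 := add_le_add ha1 hb1
          calc (-1 : A) = 1 - (1 + 1) := by norm_num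
            _ ≤ 1 - (a + b) := sub_le_sub_left hab 1
            _ = 1 - a - b := by rw [sub_sub]
        rw [abs_le]
        exact ⟨(algebraMap_le_iff_le_spectrum hqsa).mp hge r hr,
          (le_algebraMap_iff_spectrum_le hqsa).mp hle r hr⟩
      calc cfc (fun r : ℝ => |r|) q ≤ cfc (fun _ : ℝ => (1:ℝ)) q := cfc_mono hspec
        _ = 1 := cfc_const_one ℝ q
    have habs_p : cstarAbs p = 1 - s - t := by
      have hw : 0 ≤ 1 - s - t := by
        rw [sub_sub]
        exact sub_nonneg.mpr habs_q_le
      have hw_sq : (1 - s - t) * (1 - s - t) = star p * p := by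
        rw [hpsa.star_eq]
        have e1 : 1 - s - t = (2:ℂ)⁻¹ • (2 - C - D) := by
          have hh : (2:A) - C - D = (1 - s - t) + (1 - s - t) := by
            rw [← hss, ← htt, show (2:A) = 1 + 1 from one_add_one_eq_two.symm]
            abel
          rw [hh, half_smul]
        have e2 : p = (2:ℂ)⁻¹ • (p + p) := (half_smul p).symm
        rw [e1, smul_mul_smul_comm]
        conv_rhs => rw [e2, smul_mul_smul_comm]
        congr 1
        have hkey : ((2:A) - C - D) * ((2:A) - C - D)
            = (p + p) * (p + p) + ((C*D + D*C) + (C*D + D*C)) := by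
          rw [hC, hD, hp]; noncomm_ring
        rw [hkey, hCD0, hDC0]
        simp
      exact CFC.sqrt_unique hw_sq hw
    rw [habs_p, habs_q]
    abel
end

section
/- Let A be a unital C*-algebra and let a, b ∈ A with 0 ≤ a, b ≤ 1. Then a and b are orthogonal (ab = 0) if and only if a + b ≤ 1 and a is absolutely compatible with b. -/
open StarAlgebra

lemma commute_of_mem_elemental {A : Type*} [CStarAlgebra A] {b x y : A}
    (h : Commute b x) (hx : IsSelfAdjoint x) (hy : y ∈ elemental ℂ x) : Commute b y := by
  induction hy using elemental.induction_on with
  | self => exact h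
  | star_self => rwa [hx.star_eq]
  | algebraMap r => exact Algebra.commute_algebraMap_right r b
  | add u hu v hv hbu hbv => exact hbu.add_right hbv
  | mul u hu v hv hbu hbv => exact hbu.mul_right hbv
  | closure s hs hP v hv =>
    have hclosed : IsClosed {y : A | Commute b y} :=
      isClosed_eq (continuous_const.mul continuous_id) (continuous_id.mul continuous_const)
    exact closure_minimal (fun u hu => hP u hu) hclosed hv

lemma commute_cfc_complex {A : Type*} [CStarAlgebra A] {b x : A} (h : Commute b x)
    (hx : IsSelfAdjoint x) (f : ℂ → ℂ) : Commute b (cfc f x) :=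
  have : IsStarNormal x := hx.isStarNormal
  commute_of_mem_elemental h hx (cfc_mem_elemental f x)

lemma commute_sqrt {A : Type*} [CStarAlgebra A] [PartialOrder A] [StarOrderedRing A]
    {b x : A} (hx : 0 ≤ x) (h : Commute b x) : Commute b (CFC.sqrt x) := by
  rw [CFC.sqrt_eq_cfc, cfc_nnreal_eq_real _ _ hx,
    cfc_real_eq_complex _ (IsSelfAdjoint.of_nonneg hx)]
  exact commute_cfc_complex h (.of_nonneg hx) _

lemma orthogonal_of_anticommute {A : Type*} [CStarAlgebra A] [PartialOrder A] [StarOrderedRing A]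
    {a b : A} (ha : 0 ≤ a) (hb : 0 ≤ b) (h : a * b + b * a = 0) : a * b = 0 := by
  have hba : b * a = -(a * b) := eq_neg_of_add_eq_zero_right h
  have hsq : Commute b (a * a) := by
    show b * (a * a) = (a * a) * b
    calc b * (a * a) = (b * a) * a := (mul_assoc _ _ _).symm
    _ = -(a * b) * a := by rw [hba]
    _ = -(a * (b * a)) := by rw [neg_mul, mul_assoc]
    _ = -(a * -(a * b)) := by rw [hba]
    _ = (a * a) * b := by rw [mul_neg, neg_neg, mul_assoc]
  have hmul : 0 ≤ a * a := by
    simpa only [(IsSelfAdjoint.of_nonneg ha).star_eq] using star_mul_self_nonneg a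
  have hcomm : Commute b a := by
    have := commute_sqrt hmul hsq
    rwa [CFC.sqrt_mul_self a ha] at this
  rw [hcomm.eq] at h
  have h2' : (2 : ℂ) • (a * b) = 0 := by rw [two_smul]; exact h
  simpa using (smul_eq_zero.mp h2').resolve_left (by norm_num)

lemma cstarAbs_of_nonneg {A : Type*} [CStarAlgebra A] [PartialOrder A] [StarOrderedRing A]
    {x : A} (hx : 0 ≤ x) : cstarAbs x = x := by
  rw [cstarAbs, (IsSelfAdjoint.of_nonneg hx).star_eq, CFC.sqrt_mul_self x hx]

/-- For `0 ≤ a, b ≤ 1` in a unital C*-algebra, `a` and `b` are orthogonal (`ab = 0`)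
iff `a + b ≤ 1` and `a` is absolutely compatible with `b`. -/
theorem stmt3 {A : Type*} [CStarAlgebra A] [PartialOrder A] [StarOrderedRing A]
    (a b : A) (ha0 : 0 ≤ a) (ha1 : a ≤ 1) (hb0 : 0 ≤ b) (hb1 : b ≤ 1) :
    a * b = 0 ↔ (a + b ≤ 1 ∧ cstarAbs (a - b) + cstarAbs (1 - a - b) = 1) := by
  have hsa : IsSelfAdjoint a := .of_nonneg ha0
  have hsb : IsSelfAdjoint b := .of_nonneg hb0
  have hstar_ab : star (a - b) = a - b := by rw [star_sub, hsa.star_eq, hsb.star_eq]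
  constructor
  · intro h
    have hba : b * a = 0 := by
      have := congrArg star h
      rwa [star_mul, hsa.star_eq, hsb.star_eq, star_zero] at this
    have hle : a + b ≤ 1 := by
      have key : b = star (1 - a) * b * (1 - a) := by
        rw [star_sub, star_one, hsa.star_eq]
        simp [mul_sub, sub_mul, h, hba]
      have h1 : b ≤ (1 - a) * (1 - a) := by
        calc b = star (1 - a) * b * (1 - a) := key
        _ ≤ star (1 - a) * 1 * (1 - a) := star_left_conjugate_le_conjugate hb1 (1 - a)
        _ = (1 - a) * (1 - a) := by rw [star_sub, star_one, hsa.star_eq, mul_one]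
      have h2 : (1 - a) * (1 - a) ≤ 1 - a := by
        have h0a : (0:A) ≤ 1 - a := sub_nonneg.mpr ha1
        have h1a : (1:A) - a ≤ 1 := by simpa using ha0
        have := CStarAlgebra.pow_antitone h0a h1a (le_of_lt one_lt_two)
        simpa [pow_two] using this
      have := h1.trans h2
      rwa [le_sub_iff_add_le, add_comm] at this
    refine ⟨hle, ?_⟩
    have habs1 : cstarAbs (a - b) = a + b := by
      rw [cstarAbs, hstar_ab]
      refine CFC.sqrt_unique ?_ (add_nonneg ha0 hb0)
      simp [mul_sub, sub_mul, mul_add, add_mul, h, hba]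
    have h01 : (0:A) ≤ 1 - a - b := by
      rw [sub_sub, sub_nonneg]; exact hle
    rw [habs1, cstarAbs_of_nonneg h01]
    abel
  · rintro ⟨hle, habs⟩
    have h01 : (0:A) ≤ 1 - a - b := by rw [sub_sub, sub_nonneg]; exact hle
    rw [cstarAbs_of_nonneg h01] at habs
    have habs1 : cstarAbs (a - b) = a + b := by
      have : cstarAbs (a - b) = 1 - (1 - a - b) := eq_sub_of_add_eq habs
      rw [this]; abel
    have hsq : (a + b) * (a + b) = (a - b) * (a - b) := by
      have h1 : cstarAbs (a - b) * cstarAbs (a - b) = star (a - b) * (a - b) :=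
        CFC.sqrt_mul_sqrt_self _ (star_mul_self_nonneg _)
      rw [habs1, hstar_ab] at h1
      exact h1
    have hanti : a * b + b * a = 0 := by
      have expand : (a*a + (a*b + b*a)) + b*b = (a*a - (a*b + b*a)) + b*b := by
        calc (a*a + (a*b + b*a)) + b*b = (a + b) * (a + b) := by
              rw [add_mul, mul_add, mul_add]; abel
        _ = (a - b) * (a - b) := hsq
        _ = (a*a - (a*b + b*a)) + b*b := by rw [sub_mul, mul_sub, mul_sub]; abel
      have h2 : a*b + b*a = -(a*b + b*a) := by
        have h3 := add_right_cancel expand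
        rw [sub_eq_add_neg] at h3
        exact add_left_cancel h3
      have h4 : (2:ℂ) • (a*b + b*a) = 0 := by
        rw [two_smul]
        nth_rewrite 2 [h2]
        exact add_neg_cancel _
      simpa using (smul_eq_zero.mp h4).resolve_left (by norm_num)
    exact orthogonal_of_anticommute ha0 hb0 hanti
end

section
/- Two positive functions a, b in the closed unit ball of C(K), for K a compact Hausdorff space, are absolutely compatible (i.e., |a-b| + |1-a-b| = 1) if and only if a(t)·b(t) = 0 for every t ∈ K with both a(t) ∈ [0,1) and b(t) ∈ [0,1). -/
lemma ptwise (x y : ℝ) (hx0 : 0 ≤ x) (hx1 : x ≤ 1) (hy0 : 0 ≤ y) (hy1 : y ≤ 1) :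
    |x - y| + |1 - x - y| = 1 ↔ (x < 1 → y < 1 → x * y = 0) := by
  constructor
  · intro h hx hy
    rcases abs_cases (x - y) with ⟨h1, h1'⟩ | ⟨h1, h1'⟩ <;>
      rcases abs_cases (1 - x - y) with ⟨h2, h2'⟩ | ⟨h2, h2'⟩ <;>
      rw [h1, h2] at h <;> nlinarith
  · intro h
    rcases lt_or_ge x 1 with hx | hx
    · rcases lt_or_ge y 1 with hy | hy
      · have hxy := h hx hy
        rcases abs_cases (x - y) with ⟨h1, h1'⟩ | ⟨h1, h1'⟩ <;>
          rcases abs_cases (1 - x - y) with ⟨h2, h2'⟩ | ⟨h2, h2'⟩ <;>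
          rw [h1, h2] <;> nlinarith [mul_nonneg hx0 hy0, mul_self_nonneg x, mul_self_nonneg y]
      · have hy' : y = 1 := le_antisymm hy1 hy
        subst hy'
        rcases abs_cases (x - 1) with ⟨h1, h1'⟩ | ⟨h1, h1'⟩ <;>
          rcases abs_cases (1 - x - 1) with ⟨h2, h2'⟩ | ⟨h2, h2'⟩ <;>
          rw [h1, h2] <;> linarith
    · have hx' : x = 1 := le_antisymm hx1 hx
      subst hx'
      rcases abs_cases (1 - y) with ⟨h1, h1'⟩ | ⟨h1, h1'⟩ <;>
        rcases abs_cases (1 - 1 - y) with ⟨h2, h2'⟩ | ⟨h2, h2'⟩ <;>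
        rw [h1, h2] <;> linarith

/-- Two positive functions in the closed unit ball of `C(K)` are absolutely compatible
iff `a(t) b(t) = 0` whenever both `a(t), b(t) ∈ [0,1)`. -/
theorem stmt4 {K : Type*} [TopologicalSpace K] [CompactSpace K] [T2Space K]
    (a b : C(K, ℝ)) (ha0 : 0 ≤ a) (ha1 : a ≤ 1) (hb0 : 0 ≤ b) (hb1 : b ≤ 1) :
    (∀ t : K, |a t - b t| + |1 - a t - b t| = 1) ↔
      (∀ t : K, a t < 1 → b t < 1 → a t * b t = 0) := by
  have key : ∀ t : K, (|a t - b t| + |1 - a t - b t| = 1) ↔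
      (a t < 1 → b t < 1 → a t * b t = 0) := fun t =>
    ptwise (a t) (b t) (ha0 t) (ha1 t) (hb0 t) (hb1 t)
  exact ⟨fun h t => (key t).mp (h t), fun h t => (key t).mpr (h t)⟩
end

section
/- Let a, b be 2×2 positive semidefinite complex matrices with a ≤ 1 and b ≤ 1, both strict (i.e., with all eigenvalues in the open interval (0,1)). If a and b are absolutely compatible and ab ≠ ba, then det(a) > 0, det(b) > 0, trace(a) = trace(b) = 1, and det(a∘b) = 0, where a∘b = (ab+ba)/2. -/
open Matrix
open scoped ComplexOrder

/-- The absolute value `|x| = (x* x)^(1/2)` of a complex matrix. -/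
noncomputable def matAbs {n : Type*} [Fintype n] [DecidableEq n] (x : Matrix n n ℂ) :
    Matrix n n ℂ :=
  (Matrix.posSemidef_conjTranspose_mul_self x).1.eigenvectorUnitary.1 *
    diagonal ((↑) ∘ (√·) ∘ (Matrix.posSemidef_conjTranspose_mul_self x).1.eigenvalues) *
    (star (Matrix.posSemidef_conjTranspose_mul_self x).1.eigenvectorUnitary : Matrix n n ℂ)

private lemma matAbs_psd {n : Type*} [Fintype n] [DecidableEq n] (x : Matrix n n ℂ) :
    (matAbs x).PosSemidef := by
  have hD : (diagonal ((↑) ∘ (√·) ∘ (Matrix.posSemidef_conjTranspose_mul_self x).1.eigenvalues)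
      : Matrix n n ℂ).PosSemidef :=
    PosSemidef.diagonal (fun i => Complex.zero_le_real.mpr (Real.sqrt_nonneg _))
  have := hD.mul_mul_conjTranspose_same
    ((Matrix.posSemidef_conjTranspose_mul_self x).1.eigenvectorUnitary : Matrix n n ℂ)
  simpa [matAbs, Unitary.coe_star, star_eq_conjTranspose] using this

private lemma matAbs_sq {n : Type*} [Fintype n] [DecidableEq n] (x : Matrix n n ℂ) :
    matAbs x * matAbs x = xᴴ * x := by
  have h := Matrix.posSemidef_conjTranspose_mul_self x
  have hs := h.1.spectral_theorem
  rw [Unitary.conjStarAlgAut_apply] at hs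
  have hU : (star h.1.eigenvectorUnitary : Matrix n n ℂ) * h.1.eigenvectorUnitary = 1 :=
    Unitary.coe_star_mul_self _
  have hD : diagonal (((↑) ∘ (√·) ∘ h.1.eigenvalues) : n → ℂ)
      * diagonal ((↑) ∘ (√·) ∘ h.1.eigenvalues) = diagonal (RCLike.ofReal ∘ h.1.eigenvalues) := by
    rw [diagonal_mul_diagonal]; congr 1; funext i
    simp only [Function.comp_apply]
    rw [← Complex.ofReal_mul, Real.mul_self_sqrt (h.eigenvalues_nonneg i)]; rfl
  unfold matAbs
  conv_rhs => rw [hs]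
  have e : ∀ A D B : Matrix n n ℂ, A * D * B * (A * D * B) = A * D * (B * A) * D * B := by
    intro A D B; simp only [Matrix.mul_assoc]
  rw [e, hU, Matrix.mul_one, Matrix.mul_assoc _ (diagonal _) (diagonal _), hD]

/-- Cayley–Hamilton for 2×2 matrices. -/
private lemma CH2 (m : Matrix (Fin 2) (Fin 2) ℂ) : m * m = m.trace • m - m.det • 1 := by
  ext i j
  fin_cases i <;> fin_cases j <;>
    simp [Matrix.mul_apply, Matrix.trace_fin_two, Matrix.det_fin_two, Fin.sum_univ_two,
      Matrix.one_apply] <;> ring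

/-- Polarized Cayley–Hamilton for 2×2 matrices. -/
private lemma polar2 (x y : Matrix (Fin 2) (Fin 2) ℂ) :
    x * y + y * x = x.trace • y + y.trace • x + ((x * y).trace - x.trace * y.trace) • 1 := by
  ext i j
  fin_cases i <;> fin_cases j <;>
    simp [Matrix.mul_apply, Matrix.trace_fin_two, Matrix.det_fin_two, Fin.sum_univ_two,
      Matrix.one_apply] <;> ring

private lemma detExpand (x y : Matrix (Fin 2) (Fin 2) ℂ) (s t r : ℂ) :
    (s • x + t • y + r • (1 : Matrix (Fin 2) (Fin 2) ℂ)).det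
      = r^2 + r*s*x.trace + r*t*y.trace + s^2*x.det + t^2*y.det
        + s*t*(x.trace*y.trace - (x*y).trace) := by
  simp [Matrix.det_fin_two, Matrix.trace_fin_two, Matrix.mul_apply, Fin.sum_univ_two,
    Matrix.one_apply]
  ring

private lemma traceC (a b : Matrix (Fin 2) (Fin 2) ℂ) :
    (a * b + b * a).trace = 2 * (a * b).trace := by
  simp [Matrix.trace_fin_two, Matrix.mul_apply, Fin.sum_univ_two]
  ring

private lemma traceSC (a b : Matrix (Fin 2) (Fin 2) ℂ) :
    ((a + b) * (a * b + b * a)).trace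
      = 2 * (a.trace * (a * b).trace - a.det * b.trace)
        + 2 * (b.trace * (a * b).trace - b.det * a.trace) := by
  simp [Matrix.trace_fin_two, Matrix.det_fin_two, Matrix.mul_apply, Fin.sum_univ_two]
  ring

private lemma lin_indep (a b : Matrix (Fin 2) (Fin 2) ℂ) (hcomm : a * b ≠ b * a) (s t r : ℂ)
    (h : s • a + t • b + r • (1 : Matrix (Fin 2) (Fin 2) ℂ) = 0) : s = 0 ∧ t = 0 ∧ r = 0 := by
  have ht : t = 0 := by
    by_contra ht
    apply hcomm
    have h1 : t • b = -(s • a) - r • (1 : Matrix (Fin 2) (Fin 2) ℂ) := by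
      have h2 : s • a + (t • b + r • (1 : Matrix (Fin 2) (Fin 2) ℂ)) = 0 := by
        rw [← add_assoc]; exact h
      exact eq_sub_of_add_eq (eq_neg_of_add_eq_zero_right h2)
    have hb : b = (-(t⁻¹ * s)) • a + (-(t⁻¹ * r)) • (1 : Matrix (Fin 2) (Fin 2) ℂ) := by
      have := congrArg (fun m => t⁻¹ • m) h1
      simp only [smul_smul, inv_mul_cancel₀ ht, one_smul, smul_sub, smul_neg] at this
      rw [this]; module
    rw [hb]
    simp [mul_add, add_mul, Matrix.mul_smul, Matrix.smul_mul]
  subst ht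
  have hs : s = 0 := by
    by_contra hs
    apply hcomm
    have h1 : s • a = -(r • (1 : Matrix (Fin 2) (Fin 2) ℂ)) := by
      simpa using eq_neg_of_add_eq_zero_left (by simpa using h)
    have haeq : a = (-(s⁻¹ * r)) • (1 : Matrix (Fin 2) (Fin 2) ℂ) := by
      have := congrArg (fun m => s⁻¹ • m) h1
      simpa [smul_smul, inv_mul_cancel₀ hs] using this
    rw [haeq]
    simp [Matrix.mul_smul, Matrix.smul_mul]
  subst hs
  have hr : r = 0 := by
    have := congrFun (congrFun (by simpa using h :
      r • (1 : Matrix (Fin 2) (Fin 2) ℂ) = 0) 0) 0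
    simpa [Matrix.one_apply] using this
  exact ⟨rfl, rfl, hr⟩

private lemma psd_sq_scalar (p : Matrix (Fin 2) (Fin 2) ℂ) (hp : p.PosSemidef) (μ : ℂ)
    (h : p * p = μ • 1) : ∃ ν : ℂ, p = ν • 1 := by
  have h10 : p 1 0 = star (p 0 1) := by
    have := congrFun (congrFun hp.1 1) 0
    simpa [Matrix.conjTranspose_apply] using this.symm
  have d0 : 0 ≤ p 0 0 := by
    have := hp.dotProduct_mulVec_nonneg (Pi.single 0 1)
    simpa [dotProduct, mulVec, Pi.single_apply, Fin.sum_univ_two] using this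
  have d1 : 0 ≤ p 1 1 := by
    have := hp.dotProduct_mulVec_nonneg (Pi.single 1 1)
    simpa [dotProduct, mulVec, Pi.single_apply, Fin.sum_univ_two] using this
  have e01 : p 0 0 * p 0 1 + p 0 1 * p 1 1 = 0 := by
    have := congrFun (congrFun h 0) 1
    simpa [Matrix.mul_apply, Fin.sum_univ_two, Matrix.one_apply] using this
  have e00 : p 0 0 * p 0 0 + p 0 1 * p 1 0 = μ := by
    have := congrFun (congrFun h 0) 0
    simpa [Matrix.mul_apply, Fin.sum_univ_two, Matrix.one_apply] using this
  have e11 : p 1 0 * p 0 1 + p 1 1 * p 1 1 = μ := by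
    have := congrFun (congrFun h 1) 1
    simpa [Matrix.mul_apply, Fin.sum_univ_two, Matrix.one_apply] using this
  have hzero : p 0 0 + p 1 1 = 0 → p 0 0 = 0 ∧ p 1 1 = 0 := by
    intro hs
    rw [Complex.le_def] at d0 d1
    have hre : (p 0 0).re + (p 1 1).re = 0 := by
      have := congrArg Complex.re hs; simpa using this
    have h0 : (p 0 0).re = 0 := by
      have := d0.1; have := d1.1; simp at *; linarith
    have h1 : (p 1 1).re = 0 := by
      have := d0.1; have := d1.1; simp at *; linarith
    constructor <;> apply Complex.ext <;> simp_all
  have hdiag : p 0 1 = 0 → p 0 0 = p 1 1 → ∃ ν : ℂ, p = ν • 1 := by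
    intro hz hd
    refine ⟨p 0 0, ?_⟩
    ext i j
    fin_cases i <;> fin_cases j <;>
      simp [Matrix.one_apply, hz, hd, h10]
  have e01' : p 0 1 * (p 0 0 + p 1 1) = 0 := by linear_combination e01
  rcases mul_eq_zero.mp e01' with hz | hs
  · have hsq : (p 0 0 - p 1 1) * (p 0 0 + p 1 1) = 0 := by
      rw [hz] at e00 e11
      rw [h10, hz] at e11
      linear_combination e00 - e11
    rcases mul_eq_zero.mp hsq with hd | hs
    · exact hdiag hz (sub_eq_zero.mp hd)
    · obtain ⟨h0, h1⟩ := hzero hs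
      exact hdiag hz (h0.trans h1.symm)
  · obtain ⟨h0, h1⟩ := hzero hs
    have h2 := hp.dotProduct_mulVec_nonneg ![p 0 1, -1]
    simp [dotProduct, mulVec, Fin.sum_univ_two, h0, h1, h10] at h2
    rw [← Complex.normSq_eq_conj_mul_self] at h2
    have h3 : Complex.normSq (p 0 1) ≤ -(Complex.normSq (p 0 1)) := by
      have := (Complex.le_def.mp h2).1
      simpa using this
    have h4 : Complex.normSq (p 0 1) = 0 := by nlinarith [Complex.normSq_nonneg (p 0 1)]
    exact hdiag (Complex.normSq_eq_zero.mp h4) (h0.trans h1.symm)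

private lemma diag_pd (a : Matrix (Fin 2) (Fin 2) ℂ) (h : a.PosDef) (i : Fin 2) :
    0 < (a i i).re ∧ (a i i).im = 0 := by
  have h2 := h.dotProduct_mulVec_pos (x := Pi.single i 1) (fun hx => by simpa using congrFun hx i)
  have h3 : 0 < a i i := by
    simpa [dotProduct, mulVec, Pi.single_apply, Fin.sum_univ_two] using h2
  rw [Complex.lt_def] at h3
  exact ⟨by simpa using h3.1, by simpa using h3.2.symm⟩

set_option maxHeartbeats 1000000 in
private lemma trace_mul_pd (a b : Matrix (Fin 2) (Fin 2) ℂ) (ha : a.PosDef) (hb : b.PosDef) :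
    (a * b).trace ≠ 0 := by
  have ha10 : a 1 0 = star (a 0 1) := by
    have := congrFun (congrFun ha.1 1) 0
    simpa [Matrix.conjTranspose_apply] using this.symm
  have hb10 : b 1 0 = star (b 0 1) := by
    have := congrFun (congrFun hb.1 1) 0
    simpa [Matrix.conjTranspose_apply] using this.symm
  obtain ⟨ha0, ha0i⟩ := diag_pd a ha 0
  obtain ⟨ha1, ha1i⟩ := diag_pd a ha 1
  obtain ⟨hb0, hb0i⟩ := diag_pd b hb 0
  obtain ⟨hb1, hb1i⟩ := diag_pd b hb 1
  have hda := ha.det_pos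
  have hdb := hb.det_pos
  rw [Complex.lt_def] at hda hdb
  have hdare : 0 < (a.det).re := by simpa using hda.1
  have hdbre : 0 < (b.det).re := by simpa using hdb.1
  rw [Matrix.det_fin_two] at hdare hdbre
  rw [ha10] at hdare
  rw [hb10] at hdbre
  have hda' : Complex.normSq (a 0 1) < (a 0 0).re * (a 1 1).re := by
    have : (a 0 0 * a 1 1 - a 0 1 * star (a 0 1)).re
        = (a 0 0).re * (a 1 1).re - Complex.normSq (a 0 1) := by
      simp [Complex.mul_re, Complex.normSq_apply, ha0i, ha1i, Complex.sub_re]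
    rw [this] at hdare; linarith
  have hdb' : Complex.normSq (b 0 1) < (b 0 0).re * (b 1 1).re := by
    have : (b 0 0 * b 1 1 - b 0 1 * star (b 0 1)).re
        = (b 0 0).re * (b 1 1).re - Complex.normSq (b 0 1) := by
      simp [Complex.mul_re, Complex.normSq_apply, hb0i, hb1i, Complex.sub_re]
    rw [this] at hdbre; linarith
  have htr : (a * b).trace = a 0 0 * b 0 0 + a 0 1 * b 1 0 + a 1 0 * b 0 1 + a 1 1 * b 1 1 := by
    simp [Matrix.trace_fin_two, Matrix.mul_apply, Fin.sum_univ_two]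
    ring
  intro hzero
  rw [htr, ha10, hb10] at hzero
  have hre := congrArg Complex.re hzero
  simp only [Complex.add_re, Complex.mul_re, Complex.zero_re] at hre
  set zr := (a 0 1).re; set zi := (a 0 1).im
  set wr := (b 0 1).re; set wi := (b 0 1).im
  have hstar_a : (star (a 0 1)).re = zr ∧ (star (a 0 1)).im = -zi := by
    constructor <;> simp [zr, zi]
  have hstar_b : (star (b 0 1)).re = wr ∧ (star (b 0 1)).im = -wi := by
    constructor <;> simp [wr, wi]
  rw [hstar_a.1, hstar_a.2, hstar_b.1, hstar_b.2, ha0i, ha1i, hb0i, hb1i] at hre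
  have hnsa : Complex.normSq (a 0 1) = zr^2 + zi^2 := by
    simp [Complex.normSq_apply, zr, zi]; ring
  have hnsb : Complex.normSq (b 0 1) = wr^2 + wi^2 := by
    simp [Complex.normSq_apply, wr, wi]; ring
  rw [hnsa] at hda'
  rw [hnsb] at hdb'
  nlinarith [sq_nonneg (zr*wi - zi*wr), sq_nonneg (zr*wr + zi*wi),
    sq_nonneg ((a 0 0).re * (b 0 0).re - (a 1 1).re * (b 1 1).re),
    mul_pos ha0 hb0, mul_pos ha1 hb1, mul_pos (mul_pos ha0 hb0) (mul_pos ha1 hb1),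
    mul_pos ha0 ha1, mul_pos hb0 hb1,
    mul_lt_mul'' hda' hdb' (by positivity) (by positivity)]

/-- If `a, b` are strict positive contractions in `M₂(ℂ)` (all eigenvalues in `(0,1)`,
i.e. `a, 1-a, b, 1-b` positive definite) which are absolutely compatible and do not
commute, then `det a > 0`, `det b > 0`, `trace a = trace b = 1` and `det (a ∘ b) = 0`. -/
theorem stmt13 (a b : Matrix (Fin 2) (Fin 2) ℂ)
    (ha : a.PosDef) (ha1 : (1 - a).PosDef) (hb : b.PosDef) (hb1 : (1 - b).PosDef)
    (hAC : matAbs (a - b) + matAbs (1 - a - b) = 1)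
    (hcomm : a * b ≠ b * a) :
    (0 < a.det.re ∧ a.det.im = 0) ∧ (0 < b.det.re ∧ b.det.im = 0) ∧
      a.trace = 1 ∧ b.trace = 1 ∧ ((2 : ℂ)⁻¹ • (a * b + b * a)).det = 0 := by
  -- determinant positivity parts
  have hdeta := ha.det_pos
  have hdetb := hb.det_pos
  rw [Complex.lt_def] at hdeta hdetb
  refine ⟨⟨by simpa using hdeta.1, by simpa using hdeta.2.symm⟩,
    ⟨by simpa using hdetb.1, by simpa using hdetb.2.symm⟩, ?_⟩
  -- hermitian facts
  have hherm_ab : (a - b)ᴴ = a - b := by rw [conjTranspose_sub, ha.1, hb.1]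
  have hherm_ab' : (1 - a - b)ᴴ = 1 - a - b := by
    rw [conjTranspose_sub, conjTranspose_sub, conjTranspose_one, ha.1, hb.1]
  -- square facts for the absolute values
  set P := matAbs (a - b) with hPdef
  have hPsd : P.PosSemidef := matAbs_psd _
  have hPsq : P * P = (a - b) * (a - b) := by
    rw [hPdef]
    rw [show matAbs (a-b) * matAbs (a-b) = (a-b)ᴴ * (a-b) from
      matAbs_sq _, hherm_ab]
  have hQsq : matAbs (1 - a - b) * matAbs (1 - a - b) = (1 - a - b) * (1 - a - b) := by
    rw [show matAbs (1-a-b) * matAbs (1-a-b) = (1-a-b)ᴴ * (1-a-b) from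
      matAbs_sq _, hherm_ab']
  -- P = a + b - ab - ba
  have hQ : matAbs (1 - a - b) = 1 - P := eq_sub_of_add_eq' hAC
  have hkey : (1 - P) * (1 - P) = (1 - a - b) * (1 - a - b) := by rw [← hQ]; exact hQsq
  have hP : P = a + b - (a * b + b * a) := by
    have e3 : (P + P) - ((a + b - (a*b+b*a)) + (a + b - (a*b+b*a)))
        = ((1 - a - b) * (1 - a - b)) - ((1 - P - P + P * P)) := by
      rw [hPsq]; noncomm_ring
    have e4 : (1 : Matrix (Fin 2) (Fin 2) ℂ) - P - P + P * P = (1-P) * (1-P) := by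
      noncomm_ring
    rw [e4, hkey, sub_self] at e3
    have e5 := sub_eq_zero.mp e3
    calc P = (2 : ℂ)⁻¹ • (P + P) := by
            rw [← two_smul ℂ P, smul_smul]; norm_num
      _ = (2 : ℂ)⁻¹ • ((a + b - (a*b+b*a)) + (a + b - (a*b+b*a))) := by rw [e5]
      _ = a + b - (a * b + b * a) := by
            rw [← two_smul ℂ (a + b - (a*b+b*a)), smul_smul]; norm_num
  have hPsd' : (a + b - (a * b + b * a)).PosSemidef := hP ▸ hPsd
  have hE2 : (a + b - (a*b+b*a)) * (a + b - (a*b+b*a)) = (a - b) * (a - b) := by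
    rw [← hP]; exact hPsq
  -- scalar abbreviations
  set α := a.trace with hαdef
  set β := b.trace with hβdef
  set τ := (a * b).trace with hτdef
  set c := a * b + b * a with hcdef
  -- basic trace identities
  have hc_tr : c.trace = 2 * τ := traceC a b
  have hc_eq : c = α • b + β • a + (τ - α * β) • 1 := polar2 a b
  have hCHc : c * c = (2 * τ) • c - c.det • 1 := by rw [CH2 c, hc_tr]
  have hsc_tr : ((a + b) * c).trace
      = 2 * (α * τ - a.det * β) + 2 * (β * τ - b.det * α) := traceSC a b
  have hpolar_sc : (a + b) * c + c * (a + b)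
      = (α + β) • c + (2 * τ) • (a + b)
        + ((2 * (α * τ - a.det * β) + 2 * (β * τ - b.det * α)) - (α + β) * (2 * τ)) • 1 := by
    have := polar2 (a + b) c
    rw [trace_add, ← hαdef, ← hβdef, hc_tr, hsc_tr] at this
    exact this
  -- the central matrix equation
  have h1 : c * c + (c + c) = (a + b) * c + c * (a + b) := by
    have e3 : (c * c + (c + c)) - ((a + b) * c + c * (a + b))
        = (a + b - c) * (a + b - c) - (a - b) * (a - b) := by
      rw [hcdef]; noncomm_ring
    rw [hE2, sub_self] at e3
    exact sub_eq_zero.mp e3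
  have main : ((2*τ+2-α-β)*β - 2*τ) • a + ((2*τ+2-α-β)*α - 2*τ) • b
      + ((2*τ+2-α-β)*(τ-α*β) + 2*a.det*β + 2*b.det*α - c.det) • (1 : Matrix (Fin 2) (Fin 2) ℂ)
      = 0 := by
    rw [hCHc, hpolar_sc] at h1
    have hdetc : (α • b + β • a + (τ - α * β) • 1).det = c.det := by rw [← hc_eq]
    rw [hc_eq] at h1
    rw [hdetc] at h1
    calc ((2*τ+2-α-β)*β - 2*τ) • a + ((2*τ+2-α-β)*α - 2*τ) • b
        + ((2*τ+2-α-β)*(τ-α*β) + 2*a.det*β + 2*b.det*α - c.det) • (1 : Matrix (Fin 2) (Fin 2) ℂ)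
        = ((2 * τ) • (α • b + β • a + (τ - α * β) • 1)
            - c.det • 1 + ((α • b + β • a + (τ - α * β) • 1) + (α • b + β • a + (τ - α * β) • 1)))
          - ((α + β) • (α • b + β • a + (τ - α * β) • 1) + (2 * τ) • (a + b)
            + ((2 * (α * τ - a.det * β) + 2 * (β * τ - b.det * α)) - (α + β) * (2 * τ)) • 1) := by
          module
      _ = 0 := by rw [h1, sub_self]
  obtain ⟨hEa, hEb, hE1⟩ := lin_indep a b hcomm _ _ _ main
  -- scalar equations
  have eqA : (2*τ+2-α-β) * β = 2*τ := sub_eq_zero.mp hEa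
  have eqB : (2*τ+2-α-β) * α = 2*τ := sub_eq_zero.mp hEb
  have eqC : (2*τ+2-α-β)*(τ-α*β) + 2*a.det*β + 2*b.det*α = c.det := sub_eq_zero.mp hE1
  have hτ : τ ≠ 0 := trace_mul_pd a b ha hb
  have hlam : (2*τ+2-α-β) ≠ 0 := by
    intro h0
    have h2 : (2:ℂ) * τ = 0 := by rw [← eqB, h0, zero_mul]
    exact hτ (by linear_combination (1/2 : ℂ) * h2)
  have hαβ : α = β := mul_left_cancel₀ hlam (eqB.trans eqA.symm)
  rw [← hαβ] at eqB eqC hc_eq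
  have dichot : (α - 1) * (τ - α) = 0 := by linear_combination (1/2 : ℂ) * eqB
  -- show trace a = 1
  have hα1 : α = 1 := by
    rcases mul_eq_zero.mp dichot with h | h
    · exact sub_eq_zero.mp h
    · -- τ = α ; derive contradiction with non-commutation
      by_contra hα1'
      have hτα : τ = α := sub_eq_zero.mp h
      rw [hτα] at hc_eq
      have hab_tr0 : (a - b).trace = 0 := by
        rw [trace_sub, ← hαdef, ← hβdef, hαβ, sub_self]
      have hsq : (a + b - c) * (a + b - c) = (-(a - b).det) • 1 := by
        rw [hE2, CH2 (a - b), hab_tr0, zero_smul, zero_sub, neg_smul]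
      obtain ⟨ν, hν⟩ := psd_sq_scalar _ hPsd' _ hsq
      · have h1α : (1 : ℂ) - α ≠ 0 := fun hh => hα1' (by linear_combination -hh)
        have hab : (1 - α) • (a + b) = (ν + (α - α * α)) • (1 : Matrix (Fin 2) (Fin 2) ℂ) := by
          have h9 : (1 - α) • (a + b) - (ν + (α - α * α)) • (1 : Matrix (Fin 2) (Fin 2) ℂ)
              = (a + b - c) - ν • 1 := by
            rw [hc_eq]; module
          rw [hν, sub_self] at h9
          exact sub_eq_zero.mp h9
        have hsum : a + b = ((1 - α)⁻¹ * (ν + (α - α * α))) • (1 : Matrix (Fin 2) (Fin 2) ℂ) := by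
          calc a + b = (1 - α)⁻¹ • ((1 - α) • (a + b)) := by
                rw [smul_smul, inv_mul_cancel₀ h1α, one_smul]
            _ = (1 - α)⁻¹ • ((ν + (α - α * α)) • (1 : Matrix (Fin 2) (Fin 2) ℂ)) := by rw [hab]
            _ = ((1 - α)⁻¹ * (ν + (α - α * α))) • (1 : Matrix (Fin 2) (Fin 2) ℂ) := by
                rw [smul_smul]
        have hbeq : b = ((1 - α)⁻¹ * (ν + (α - α * α))) • (1 : Matrix (Fin 2) (Fin 2) ℂ) - a :=
          eq_sub_of_add_eq' hsum
        apply hcomm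
        rw [hbeq]
        simp [mul_sub, sub_mul, Matrix.mul_smul, Matrix.smul_mul]
  -- conclude
  have hβ1 : β = 1 := hαβ ▸ hα1
  refine ⟨hα1, hβ1, ?_⟩
  -- determinant of the Jordan product
  rw [Matrix.det_smul]
  have hD2 : c.det = (τ - α*α)^2 + (τ - α*α)*α*β + (τ - α*α)*α*α + α^2*b.det + α^2*a.det
      + α*α*(β*α - (b*a).trace) := by
    conv_lhs => rw [hc_eq]
    rw [detExpand b a α α (τ - α * α)]
  have hba_tr : (b * a).trace = τ := Matrix.trace_mul_comm b a
  rw [hba_tr] at hD2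
  rw [hα1] at eqC hD2
  rw [hβ1] at hD2
  have hD0 : c.det = 0 := by linear_combination 2 * hD2 + eqC
  rw [hD0, mul_zero]
end

section
/- Let a, b be 2×2 positive semidefinite complex matrices with 0 ≤ a, b ≤ 1 such that det(a) > 0, det(b) > 0, trace(a) = trace(b) = 1, and det(a∘b) = 0, where a∘b = (ab+ba)/2. Then a and b are absolutely compatible, i.e., |a-b| + |1-a-b| = 1. -/
open Matrix
open scoped ComplexOrder

lemma herm_facts (c : Matrix (Fin 2) (Fin 2) ℂ) (hc : c.IsHermitian) (htc : c.trace = 0) :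
    ∃ r : ℝ, 0 ≤ r ∧ cᴴ * c = ((r : ℂ) • 1) ∧ (r : ℂ) = - c.det := by
  have h10 : c 1 0 = (starRingEnd ℂ) (c 0 1) := by
    have := hc.apply 1 0; rw [Complex.star_def] at this; exact this.symm
  have h00 : ((c 0 0).re : ℂ) = c 0 0 := by
    have := hc.apply 0 0; rw [Complex.star_def] at this
    exact Complex.conj_eq_iff_re.mp this
  have h11 : c 1 1 = - c 0 0 := by
    rw [Matrix.trace_fin_two] at htc; linear_combination htc
  refine ⟨(c 0 0).re ^ 2 + Complex.normSq (c 0 1),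
    add_nonneg (sq_nonneg _) (Complex.normSq_nonneg _), ?_, ?_⟩
  · rw [hc.eq]
    ext i j
    fin_cases i <;> fin_cases j <;>
      simp [Matrix.mul_apply, Fin.sum_univ_two, Matrix.one_apply, h10, h11]
    · rw [Complex.normSq_eq_conj_mul_self]
      linear_combination (-(c 0 0) - ((c 0 0).re:ℂ)) * h00
    · ring
    · ring
    · rw [Complex.normSq_eq_conj_mul_self]
      linear_combination (-(c 0 0) - ((c 0 0).re:ℂ)) * h00
  · rw [Matrix.det_fin_two, h10, h11]
    push_cast
    rw [Complex.normSq_eq_conj_mul_self]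
    linear_combination (((c 0 0).re:ℂ) + c 0 0) * h00

lemma matAbs_scalar (c : Matrix (Fin 2) (Fin 2) ℂ) (r : ℝ) (hr : 0 ≤ r)
    (h : cᴴ * c = ((r : ℂ) • 1)) :
    matAbs c = ((Real.sqrt r : ℂ) • 1) := by
  have hS : Matrix.PosSemidef (((Real.sqrt r : ℝ) : ℂ) • (1 : Matrix (Fin 2) (Fin 2) ℂ)) := by
    rw [Matrix.smul_one_eq_diagonal]
    refine Matrix.PosSemidef.diagonal (fun i => ?_)
    exact Complex.zero_le_real.mpr (Real.sqrt_nonneg r)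
  have hsq : (((Real.sqrt r : ℝ) : ℂ) • (1 : Matrix (Fin 2) (Fin 2) ℂ)) ^ 2 = cᴴ * c := by
    rw [h, smul_pow, one_pow, ← Complex.ofReal_pow, Real.sq_sqrt hr]
  have hH := (Matrix.posSemidef_conjTranspose_mul_self c).1
  have hspec := hH.spectral_theorem
  rw [Unitary.conjStarAlgAut_apply] at hspec
  have hUU : (star hH.eigenvectorUnitary : Matrix (Fin 2) (Fin 2) ℂ) * hH.eigenvectorUnitary = 1 :=
    Unitary.star_mul_self_of_mem hH.eigenvectorUnitary.2
  have hUU' : (hH.eigenvectorUnitary : Matrix (Fin 2) (Fin 2) ℂ) *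
      star (hH.eigenvectorUnitary : Matrix (Fin 2) (Fin 2) ℂ) = 1 :=
    Unitary.mul_star_self_of_mem hH.eigenvectorUnitary.2
  have hd : diagonal (RCLike.ofReal ∘ hH.eigenvalues) = ((r : ℂ) • 1 : Matrix (Fin 2) (Fin 2) ℂ) := by
    obtain ⟨U, hUdef⟩ : ∃ U, U = (hH.eigenvectorUnitary : Matrix (Fin 2) (Fin 2) ℂ) := ⟨_, rfl⟩
    rw [← hUdef] at hspec hUU
    have : star U * (cᴴ * c) * U = diagonal (RCLike.ofReal ∘ hH.eigenvalues) := by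
      nth_rewrite 1 [hspec]; simp only [← mul_assoc, hUU, one_mul]; rw [mul_assoc, hUU, mul_one]
    rw [← this, h, mul_smul_comm, mul_one, smul_mul_assoc, hUU]
  have hev : ∀ i, hH.eigenvalues i = r := by
    intro i
    have := congrFun (congrFun hd i) i
    simp at this
    exact_mod_cast this
  unfold matAbs
  have hdiag : diagonal ((↑) ∘ (√·) ∘ hH.eigenvalues) = ((Real.sqrt r : ℂ) • 1 : Matrix (Fin 2) (Fin 2) ℂ) := by
    rw [Matrix.smul_one_eq_diagonal]; congr 1; funext i; simp [hev i]
  change (hH.eigenvectorUnitary : Matrix (Fin 2) (Fin 2) ℂ) * diagonal ((↑) ∘ (√·) ∘ hH.eigenvalues) *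
    (star hH.eigenvectorUnitary : Matrix (Fin 2) (Fin 2) ℂ) = _
  rw [hdiag, mul_smul_comm, mul_one, smul_mul_assoc, hUU']

/-- If `0 ≤ a, b ≤ 1` in `M₂(ℂ)` satisfy `det a > 0`, `det b > 0`,
`trace a = trace b = 1` and `det (a ∘ b) = 0`, then `a` and `b` are absolutely
compatible. -/
theorem stmt14 (a b : Matrix (Fin 2) (Fin 2) ℂ)
    (ha : a.PosSemidef) (ha1 : (1 - a).PosSemidef)
    (hb : b.PosSemidef) (hb1 : (1 - b).PosSemidef)
    (hdeta : 0 < a.det.re ∧ a.det.im = 0) (hdetb : 0 < b.det.re ∧ b.det.im = 0)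
    (htra : a.trace = 1) (htrb : b.trace = 1)
    (hdet : ((2 : ℂ)⁻¹ • (a * b + b * a)).det = 0) :
    matAbs (a - b) + matAbs (1 - a - b) = 1 := by
  -- trace hypotheses on entries
  have h1 : a 0 0 + a 1 1 = 1 := by rw [← Matrix.trace_fin_two]; exact htra
  have h2 : b 0 0 + b 1 1 = 1 := by rw [← Matrix.trace_fin_two]; exact htrb
  have ha' : a 1 1 = 1 - a 0 0 := by linear_combination h1
  have hb' : b 1 1 = 1 - b 0 0 := by linear_combination h2
  -- Hermitian and trace-zero facts for a - b and 1 - a - b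
  have hcherm : (a - b).IsHermitian := ha.1.sub hb.1
  have hctr : (a - b).trace = 0 := by rw [Matrix.trace_sub, htra, htrb]; ring
  have hdherm : (1 - a - b).IsHermitian := (Matrix.isHermitian_one.sub ha.1).sub hb.1
  have hdtr : (1 - a - b).trace = 0 := by
    rw [Matrix.trace_sub, Matrix.trace_sub, Matrix.trace_one, htra, htrb]
    norm_num
  obtain ⟨r₁, hr₁, hc2, hcd⟩ := herm_facts _ hcherm hctr
  obtain ⟨r₂, hr₂, hd2, hdd⟩ := herm_facts _ hdherm hdtr
  have habs1 := matAbs_scalar _ _ hr₁ hc2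
  have habs2 := matAbs_scalar _ _ hr₂ hd2
  -- the scalar invariants
  have hAeq : a.det = ((a.det.re : ℝ) : ℂ) := by
    apply Complex.ext <;> simp [hdeta.2]
  have hBeq : b.det = ((b.det.re : ℝ) : ℂ) := by
    apply Complex.ext <;> simp [hdetb.2]
  have hUstar : (starRingEnd ℂ) (a * b).trace = (a * b).trace := by
    rw [← Complex.star_def, ← Matrix.trace_conjTranspose, Matrix.conjTranspose_mul,
      ha.1.eq, hb.1.eq, Matrix.trace_mul_comm]
  have hUeq : (a * b).trace = (((a * b).trace.re : ℝ) : ℂ) :=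
    (Complex.conj_eq_iff_re.mp hUstar).symm
  set α : ℂ := a.det with hα
  set β : ℂ := b.det with hβ
  set u : ℂ := (a * b).trace with hu
  set A : ℝ := a.det.re
  set B : ℝ := b.det.re
  set U : ℝ := u.re
  -- determinant identities
  have e1 : (a - b).det = α + β - 1 + u := by
    rw [hα, hβ, hu]
    simp only [Matrix.det_fin_two, Matrix.trace_fin_two, Matrix.mul_apply, Fin.sum_univ_two,
      Matrix.sub_apply]
    rw [ha', hb']; ring
  have e2 : (1 - a - b).det = α + β - u := by
    rw [hα, hβ, hu]
    simp only [Matrix.det_fin_two, Matrix.trace_fin_two, Matrix.mul_apply, Fin.sum_univ_two,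
      Matrix.sub_apply, Matrix.one_apply_eq, Matrix.one_apply_ne (by decide : (0 : Fin 2) ≠ 1),
      Matrix.one_apply_ne (by decide : (1 : Fin 2) ≠ 0)]
    rw [ha', hb']; ring
  have e3 : (a * b + b * a).det = u ^ 2 - u + α + β := by
    rw [hα, hβ, hu]
    simp only [Matrix.det_fin_two, Matrix.trace_fin_two, Matrix.mul_apply, Fin.sum_univ_two,
      Matrix.add_apply]
    rw [ha', hb']; ring
  have hM : (a * b + b * a).det = 0 := by
    rw [Matrix.det_smul] at hdet
    simpa using hdet
  -- real versions
  have hr1' : r₁ = 1 - U - A - B := by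
    have : (r₁ : ℂ) = ((1 - U - A - B : ℝ) : ℂ) := by
      rw [hcd, e1, hAeq, hBeq, hUeq]; push_cast; ring
    exact_mod_cast this
  have hr2' : r₂ = U - A - B := by
    have : (r₂ : ℂ) = ((U - A - B : ℝ) : ℂ) := by
      rw [hdd, e2, hAeq, hBeq, hUeq]; push_cast; ring
    exact_mod_cast this
  have hUq : U ^ 2 - U + A + B = 0 := by
    have h0 : ((U ^ 2 - U + A + B : ℝ) : ℂ) = 0 := by
      rw [← hM, e3, hAeq, hBeq, hUeq]; push_cast; ring
    exact_mod_cast h0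
  have hD : 0 < A + B := add_pos hdeta.1 hdetb.1
  -- the square-root computation
  have hprod : r₁ * r₂ = (A + B) ^ 2 := by
    rw [hr1', hr2']; linear_combination (-1 : ℝ) * hUq
  have hs : Real.sqrt r₁ * Real.sqrt r₂ = A + B := by
    rw [← Real.sqrt_mul hr₁, hprod, Real.sqrt_sq hD.le]
  have hsum : (Real.sqrt r₁ + Real.sqrt r₂) ^ 2 = 1 := by
    rw [add_sq, Real.sq_sqrt hr₁, Real.sq_sqrt hr₂]
    have hsum' : r₁ + r₂ = 1 - 2 * (A + B) := by rw [hr1', hr2']; ring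
    linear_combination 2 * hs + hsum'
  have key : Real.sqrt r₁ + Real.sqrt r₂ = 1 := by
    have hfac : (Real.sqrt r₁ + Real.sqrt r₂ - 1) * (Real.sqrt r₁ + Real.sqrt r₂ + 1) = 0 := by
      linear_combination hsum
    rcases mul_eq_zero.mp hfac with h | h
    · linarith
    · nlinarith [Real.sqrt_nonneg r₁, Real.sqrt_nonneg r₂]
  rw [habs1, habs2, ← add_smul]
  have : ((Real.sqrt r₁ : ℂ) + (Real.sqrt r₂ : ℂ)) = 1 := by exact_mod_cast key
  rw [this, one_smul]
end

section
/- Let a = [[t, α],[conj α, 1-t]] and b = [[x, y+iz],[y-iz, 1-x]] be 2×2 matrices with t, x ∈ (0,1), |α|² < t(1-t), y² + z² < x(1-x), and let ã = (t, Re α, Im α), ã' = (1-t, -Re α, -Im α), b̃ = (x, y, z) in ℝ³. Then det(a∘b) = 0 if and only if ‖b̃ - ã‖₂ + ‖b̃ - ã'‖₂ = 1, where a∘b = (ab+ba)/2 and ‖·‖₂ is the Euclidean norm. -/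
open Matrix
open scoped ComplexOrder

lemma stmt18_det (t x y z a2 a3 : ℝ) :
    (((2 : ℂ)⁻¹ • (!![(t : ℂ), (a2:ℂ)+(a3:ℂ)*Complex.I;
        (starRingEnd ℂ) ((a2:ℂ)+(a3:ℂ)*Complex.I), 1 - (t : ℂ)] *
        !![(x : ℂ), (y : ℂ) + (z : ℂ) * Complex.I;
           (y : ℂ) - (z : ℂ) * Complex.I, 1 - (x : ℂ)] +
      !![(x : ℂ), (y : ℂ) + (z : ℂ) * Complex.I;
           (y : ℂ) - (z : ℂ) * Complex.I, 1 - (x : ℂ)] *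
        !![(t : ℂ), (a2:ℂ)+(a3:ℂ)*Complex.I;
           (starRingEnd ℂ) ((a2:ℂ)+(a3:ℂ)*Complex.I), 1 - (t : ℂ)])).det)
    = ((((1 + (2*x-1)*(2*t-1) + 4*(y*a2+z*a3))^2
        - 4*((x-(1-t))^2 + (y+a2)^2 + (z+a3)^2))/16 : ℝ) : ℂ) := by
  have hI := Complex.I_sq
  simp only [map_add, _root_.map_mul, Complex.conj_ofReal, Complex.conj_I]
  simp only [Matrix.det_fin_two, Matrix.smul_apply, Matrix.add_apply, Matrix.mul_apply,
    Fin.sum_univ_two, smul_eq_mul]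
  simp only [Matrix.cons_val', Matrix.cons_val_zero, Matrix.cons_val_one, Matrix.head_cons,
    Matrix.empty_val', Matrix.cons_val_fin_one, Matrix.head_fin_const, Matrix.of_apply]
  push_cast
  linear_combination (-((a3:ℂ)*z)*((t:ℂ)*x + (1-(t:ℂ))*(1-(x:ℂ)) + 2*(a2:ℂ)*y)
    + ((a3:ℂ)*z)^2*(Complex.I^2-1) + (((z:ℂ)+(a3:ℂ))^2)/4) * hI

lemma stmt18_real (t x y z a2 a3 : ℝ)
    (hα : a2 ^ 2 + a3 ^ 2 < t * (1 - t)) (hyz : y ^ 2 + z ^ 2 < x * (1 - x)) :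
    ((1 + (2*x-1)*(2*t-1) + 4*(y*a2+z*a3))^2
        - 4*((x-(1-t))^2 + (y+a2)^2 + (z+a3)^2))/16 = 0 ↔
    Real.sqrt ((x - t) ^ 2 + (y - a2) ^ 2 + (z - a3) ^ 2) +
      Real.sqrt ((x - (1 - t)) ^ 2 + (y + a2) ^ 2 + (z + a3) ^ 2) = 1 := by
  set p := Real.sqrt ((x - t) ^ 2 + (y - a2) ^ 2 + (z - a3) ^ 2) with hpdef
  set q := Real.sqrt ((x - (1 - t)) ^ 2 + (y + a2) ^ 2 + (z + a3) ^ 2) with hqdef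
  have hp0 : 0 ≤ p := Real.sqrt_nonneg _
  have hq0 : 0 ≤ q := Real.sqrt_nonneg _
  have hp2 : p ^ 2 = (x - t) ^ 2 + (y - a2) ^ 2 + (z - a3) ^ 2 :=
    Real.sq_sqrt (by positivity)
  have hq2 : q ^ 2 = (x - (1 - t)) ^ 2 + (y + a2) ^ 2 + (z + a3) ^ 2 :=
    Real.sq_sqrt (by positivity)
  have hP1 : (x - t) ^ 2 + (y - a2) ^ 2 + (z - a3) ^ 2 < 1 := by
    nlinarith [sq_nonneg (y + a2), sq_nonneg (z + a3), sq_nonneg (x + t - 1)]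
  have hQ1 : (x - (1 - t)) ^ 2 + (y + a2) ^ 2 + (z + a3) ^ 2 < 1 := by
    nlinarith [sq_nonneg (y - a2), sq_nonneg (z - a3), sq_nonneg (x - t)]
  have hp1 : p < 1 := by nlinarith [hp2]
  have hq1 : q < 1 := by nlinarith [hq2]
  have hS : 1 + (2*x-1)*(2*t-1) + 4*(y*a2+z*a3) = q ^ 2 - p ^ 2 + 1 := by
    linear_combination hp2 - hq2
  constructor
  · intro h
    have h16 : (q ^ 2 - p ^ 2 + 1) ^ 2 = 4 * q ^ 2 := by
      rw [← hS]; linear_combination 16 * h - 4 * hq2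
    have hfac : (p + q - 1) * ((q - 1 - p) * ((q + 1 - p) * (q + 1 + p))) = 0 := by
      linear_combination h16
    rcases mul_eq_zero.mp hfac with h1 | h2
    · linarith
    · rcases mul_eq_zero.mp h2 with h3 | h4
      · linarith
      · rcases mul_eq_zero.mp h4 with h5 | h6 <;> linarith
  · intro h
    have h2q : 1 + (2*x-1)*(2*t-1) + 4*(y*a2+z*a3) = 2 * q := by
      linear_combination hS + (q - 1 - p) * h
    linear_combination ((1 + (2*x-1)*(2*t-1) + 4*(y*a2+z*a3)) + 2*q)/16 * h2q + hq2/4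

/-- For strict-type matrices `a = [[t, α], [α̅, 1-t]]` and `b = [[x, y+iz], [y-iz, 1-x]]`,
`det (a ∘ b) = 0` iff the point `(x, y, z)` lies on the ellipsoid with foci
`ã = (t, Re α, Im α)` and `ã' = (1-t, -Re α, -Im α)` and major axis length `1`. -/
theorem stmt18 (t x y z : ℝ) (α : ℂ) (ht0 : 0 < t) (ht1 : t < 1)
    (hx0 : 0 < x) (hx1 : x < 1)
    (hα : Complex.normSq α < t * (1 - t)) (hyz : y ^ 2 + z ^ 2 < x * (1 - x)) :
    (((2 : ℂ)⁻¹ • (!![(t : ℂ), α; (starRingEnd ℂ) α, 1 - (t : ℂ)] *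
        !![(x : ℂ), (y : ℂ) + (z : ℂ) * Complex.I;
           (y : ℂ) - (z : ℂ) * Complex.I, 1 - (x : ℂ)] +
      !![(x : ℂ), (y : ℂ) + (z : ℂ) * Complex.I;
           (y : ℂ) - (z : ℂ) * Complex.I, 1 - (x : ℂ)] *
        !![(t : ℂ), α; (starRingEnd ℂ) α, 1 - (t : ℂ)])).det = 0) ↔
      Real.sqrt ((x - t) ^ 2 + (y - α.re) ^ 2 + (z - α.im) ^ 2) +
        Real.sqrt ((x - (1 - t)) ^ 2 + (y + α.re) ^ 2 + (z + α.im) ^ 2) = 1 := by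
  rw [Complex.normSq_apply] at hα
  set a2 := α.re with ha2
  set a3 := α.im with ha3
  have hαeq : α = (a2:ℂ) + (a3:ℂ)*Complex.I := by
    rw [ha2, ha3]; exact (Complex.re_add_im α).symm
  rw [hαeq, stmt18_det t x y z a2 a3, Complex.ofReal_eq_zero]
  exact stmt18_real t x y z a2 a3 (by nlinarith [hα]) hyz
end
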